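/- Let a ≥ 1 and b ≥ 1 be integers and let G be the complete multipartite graph with a parts each of size b. Then the characteristic polynomial of the signless Laplacian matrix Q(G) = D(G) + A(G) is (x - b(a-1))^{a(b-1)} (x - b(a-2))^{a-1} (x - 2b(a-1)). -/

import Mathlib

open Polynomial

/-- Adjacency matrix of the complete multipartite graph with `a` parts each of size `b`. -/
def completeMultipartiteAdj (a b : ℕ) : Matrix (Fin a × Fin b) (Fin a × Fin b) ℤ :=
  fun u v => if u.1 ≠ v.1 then 1 else 0

/-- Degree matrix: every vertex has degree `b * (a - 1)`. -/
def completeMultipartiteDeg (a b : ℕ) : Matrix (Fin a × Fin b) (Fin a × Fin b) ℤ :=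
  Matrix.diagonal fun _ => (b : ℤ) * ((a : ℤ) - 1)

open Matrix Kronecker

namespace CMPaux

/-- all ones matrix -/
def Jm (n : ℕ) : Matrix (Fin n) (Fin n) ℤ := Matrix.of fun _ _ => 1

/-- nilpotent part of the change of basis -/
def Nm (n : ℕ) : Matrix (Fin n) (Fin n) ℤ :=
  Matrix.of fun i k => if k.1 = 0 ∧ i.1 ≠ 0 then 1 else 0

def Tm (n : ℕ) : Matrix (Fin n) (Fin n) ℤ := 1 + Nm n
def Tm' (n : ℕ) : Matrix (Fin n) (Fin n) ℤ := 1 - Nm n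

/-- triangular form of J conjugated by T -/
def Ub (n : ℕ) : Matrix (Fin n) (Fin n) ℤ :=
  Matrix.of fun j l => if j.1 = 0 then (if l.1 = 0 then (n : ℤ) else 1) else 0

lemma Nm_sq (n : ℕ) : Nm n * Nm n = 0 := by
  ext i k
  simp only [Matrix.mul_apply, Nm, Matrix.of_apply, Matrix.zero_apply]
  rw [Finset.sum_eq_zero]
  intro x _
  by_cases hx : x.1 = 0 <;> simp [hx]

lemma Tm'_mul_Tm (n : ℕ) : Tm' n * Tm n = 1 := by
  have h := Nm_sq n
  simp only [Tm, Tm']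
  rw [sub_mul, mul_add, mul_add, one_mul, one_mul, mul_one]
  rw [h]
  abel

lemma Tm_mul_Tm' (n : ℕ) : Tm n * Tm' n = 1 :=
  mul_eq_one_comm.mp (Tm'_mul_Tm n)

lemma sum_ne_zero (n : ℕ) (h : 0 < n) :
    (∑ x : Fin n, if x.1 ≠ 0 then (1 : ℤ) else 0) = (n : ℤ) - 1 := by
  have h0 : (∑ x : Fin n, if x = (⟨0, h⟩ : Fin n) then (1 : ℤ) else 0) = 1 := by
    simp
  have h1 : (∑ x : Fin n, (1 : ℤ)) = (n : ℤ) := by simp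
  have : ∀ x : Fin n, (if x.1 ≠ 0 then (1 : ℤ) else 0)
      = 1 - (if x = (⟨0, h⟩ : Fin n) then (1 : ℤ) else 0) := by
    intro x
    by_cases hx : x.1 = 0
    · have : x = (⟨0, h⟩ : Fin n) := Fin.ext hx
      simp [hx, this]
    · have : x ≠ (⟨0, h⟩ : Fin n) := by
        intro hc; exact hx (by rw [hc])
      simp [hx, this]
  rw [Finset.sum_congr rfl (fun x _ => this x), Finset.sum_sub_distrib, h0, h1]

lemma J_mul_T (n : ℕ) (h : 0 < n) : Jm n * Tm n = Tm n * Ub n := by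
  ext i k
  have lhs : (Jm n * Tm n) i k = 1 + (if k.1 = 0 then (n : ℤ) - 1 else 0) := by
    simp only [Matrix.mul_apply, Jm, Tm, Nm, Matrix.of_apply, Matrix.add_apply,
      Matrix.one_apply, one_mul]
    rw [Finset.sum_add_distrib]
    congr 1
    · simp [Finset.sum_ite_eq']
    · by_cases hk : k.1 = 0
      · rw [if_pos hk]
        simp only [hk, true_and]
        exact sum_ne_zero n h
      · simp [hk]
  have rhs : (Tm n * Ub n) i k = 1 + (if k.1 = 0 then (n : ℤ) - 1 else 0) := by
    have hT : Tm n i (⟨0, h⟩ : Fin n) = 1 := by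
      by_cases hi : i.1 = 0
      · have : i = (⟨0, h⟩ : Fin n) := Fin.ext hi
        simp [Tm, Nm, this, Matrix.one_apply]
      · have : i ≠ (⟨0, h⟩ : Fin n) := by intro hc; exact hi (by rw [hc])
        simp [Tm, Nm, this, hi, Matrix.one_apply]
    have hsummand : ∀ x : Fin n, Tm n i x * (Ub n) x k =
        if x = (⟨0, h⟩ : Fin n) then (if k.1 = 0 then (n : ℤ) else 1) else 0 := by
      intro x
      by_cases hx : x.1 = 0
      · have hxe : x = (⟨0, h⟩ : Fin n) := Fin.ext hx
        rw [hxe, if_pos rfl, hT, one_mul]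
        simp [Ub]
      · have : x ≠ (⟨0, h⟩ : Fin n) := by intro hc; exact hx (by rw [hc])
        simp [Ub, hx, this]
    simp only [Matrix.mul_apply]
    rw [Finset.sum_congr rfl (fun x _ => hsummand x)]
    rw [Finset.sum_ite_eq' Finset.univ (⟨0, h⟩ : Fin n)
      (fun _ => (if k.1 = 0 then (n : ℤ) else 1))]
    simp only [Finset.mem_univ, if_true]
    by_cases hk : k.1 = 0 <;> simp [hk]
  rw [lhs, rhs]

lemma JI_mul_T (n : ℕ) (h : 0 < n) : (Jm n - 1) * Tm n = Tm n * (Ub n - 1) := by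
  rw [sub_mul, mul_sub, one_mul, mul_one, J_mul_T n h]

/-- charpoly is invariant under conjugation -/
lemma charpoly_conj {n : Type*} [Fintype n] [DecidableEq n]
    (P P' M : Matrix n n ℤ) (h : P' * P = 1) :
    (P * M * P').charpoly = M.charpoly := by
  have h2 : P * P' = 1 := mul_eq_one_comm.mp h
  have key : charmatrix (P * M * P') =
      P.map C * charmatrix M * P'.map C := by
    unfold charmatrix
    rw [mul_sub, sub_mul]
    congr 1
    · have hcomm : (P.map (C : ℤ →+* ℤ[X])) * Matrix.scalar n (X : ℤ[X]) =
          Matrix.scalar n (X : ℤ[X]) * P.map C := by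
        rw [Matrix.scalar_commute]
        intro r
        exact Commute.all X r
      rw [hcomm, mul_assoc, ← RingHom.mapMatrix_apply, ← RingHom.mapMatrix_apply,
        ← _root_.map_mul, h2, _root_.map_one, mul_one]
    · rw [_root_.map_mul, _root_.map_mul, RingHom.mapMatrix_apply, RingHom.mapMatrix_apply,
        RingHom.mapMatrix_apply]
  have hdet : (P.map (C : ℤ →+* ℤ[X])).det * (P'.map (C : ℤ →+* ℤ[X])).det = 1 := by
    rw [← Matrix.det_mul, ← Matrix.map_mul, h2]
    simp
  rw [Matrix.charpoly, Matrix.charpoly, key, Matrix.det_mul, Matrix.det_mul]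
  calc (P.map (C : ℤ →+* ℤ[X])).det * (charmatrix M).det * (P'.map (C : ℤ →+* ℤ[X])).det
      = (P.map (C : ℤ →+* ℤ[X])).det * (P'.map (C : ℤ →+* ℤ[X])).det * (charmatrix M).det := by
        ring
    _ = (charmatrix M).det := by rw [hdet, one_mul]

lemma prod_if_zero {M : Type*} [CommMonoid M] (n : ℕ) (h : 0 < n) (A B : M) :
    (∏ i : Fin n, (if i.1 = 0 then A else B)) = A * B ^ (n - 1) := by
  obtain ⟨m, rfl⟩ : ∃ m, n = m + 1 := ⟨n - 1, by omega⟩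
  rw [Fin.prod_univ_succ]
  simp [Fin.val_succ]

end CMPaux

open CMPaux

theorem stmt_14 (a b : ℕ) (ha : 1 ≤ a) (hb : 1 ≤ b) :
    (completeMultipartiteDeg a b + completeMultipartiteAdj a b).charpoly =
      (X - C ((b : ℤ) * ((a : ℤ) - 1))) ^ (a * (b - 1)) *
        (X - C ((b : ℤ) * ((a : ℤ) - 2))) ^ (a - 1) *
        (X - C (2 * (b : ℤ) * ((a : ℤ) - 1))) := by
  have hA : 0 < a := ha
  have hB : 0 < b := hb
  set c : ℤ := (b : ℤ) * ((a : ℤ) - 1) with hc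
  -- Q in structured form
  have hQ : completeMultipartiteDeg a b + completeMultipartiteAdj a b =
      c • (1 : Matrix (Fin a × Fin b) (Fin a × Fin b) ℤ) + (Jm a - 1) ⊗ₖ Jm b := by
    ext ⟨i, j⟩ ⟨k, l⟩
    simp only [completeMultipartiteDeg, completeMultipartiteAdj, Matrix.add_apply,
      Matrix.diagonal_apply, Matrix.smul_apply, Matrix.one_apply, Matrix.kroneckerMap_apply,
      Jm, Matrix.sub_apply, Matrix.one_apply, Matrix.of_apply, smul_eq_mul]
    by_cases hik : i = k
    · subst hik
      by_cases hjl : j = l <;> simp [hjl, hc]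
    · have : (i, j) ≠ (k, l) := by simp [hik]
      simp [hik, this]
  set P : Matrix (Fin a × Fin b) (Fin a × Fin b) ℤ := Tm a ⊗ₖ Tm b with hP
  set P' : Matrix (Fin a × Fin b) (Fin a × Fin b) ℤ := Tm' a ⊗ₖ Tm' b with hP'
  set U : Matrix (Fin a × Fin b) (Fin a × Fin b) ℤ :=
    c • (1 : Matrix (Fin a × Fin b) (Fin a × Fin b) ℤ) + (Ub a - 1) ⊗ₖ Ub b with hU
  have hPP' : P' * P = 1 := by
    rw [hP, hP', ← Matrix.mul_kronecker_mul, Tm'_mul_Tm, Tm'_mul_Tm,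
      Matrix.one_kronecker_one]
  have hPP'2 : P * P' = 1 := mul_eq_one_comm.mp hPP'
  have hQP : (completeMultipartiteDeg a b + completeMultipartiteAdj a b) * P = P * U := by
    rw [hQ, hU, add_mul, mul_add, smul_mul_assoc, one_mul, mul_smul_comm, mul_one]
    congr 1
    rw [hP, ← Matrix.mul_kronecker_mul, ← Matrix.mul_kronecker_mul,
      JI_mul_T a hA, J_mul_T b hB]
  have hQconj : completeMultipartiteDeg a b + completeMultipartiteAdj a b = P * U * P' := by
    calc completeMultipartiteDeg a b + completeMultipartiteAdj a b
        = (completeMultipartiteDeg a b + completeMultipartiteAdj a b) * (P * P') := by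
          rw [hPP'2, mul_one]
      _ = ((completeMultipartiteDeg a b + completeMultipartiteAdj a b) * P) * P' := by
          rw [mul_assoc]
      _ = P * U * P' := by rw [hQP]
  rw [hQconj, charpoly_conj P P' U hPP']
  -- now compute charpoly of U via reindexing to Fin (a*b)
  set e : Fin a × Fin b ≃ Fin (a * b) := finProdFinEquiv with he
  rw [← Matrix.charpoly_reindex e U]
  have hUB : ∀ p q : Fin a × Fin b, U p q ≠ 0 → (e p).1 ≤ (e q).1 := by
    intro ⟨i, j⟩ ⟨k, l⟩ hne
    by_cases hpq : ((i, j) : Fin a × Fin b) = (k, l)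
    · rw [hpq]
    · rw [hU] at hne
      simp only [Matrix.add_apply, Matrix.smul_apply, Matrix.one_apply, hpq, if_neg hpq,
        smul_eq_mul, mul_zero, zero_add, Matrix.kroneckerMap_apply] at hne
      have h1 : (Ub a - 1) i k ≠ 0 := fun h0 => hne (by simp [h0])
      have h2 : Ub b j l ≠ 0 := fun h0 => hne (by simp [h0])
      have hik : i.1 ≤ k.1 := by
        by_cases hi : i.1 = 0
        · omega
        · have : i = k := by
            by_contra hik
            apply h1
            simp [Ub, Matrix.sub_apply, Matrix.one_apply, hi, hik]
          omega
      have hjl : j.1 ≤ l.1 := by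
        have hj : j.1 = 0 := by
          by_contra hj
          exact h2 (by simp [Ub, hj])
        omega
      have hval : (e (i, j)).1 = j.1 + b * i.1 := rfl
      have hval2 : (e (k, l)).1 = l.1 + b * k.1 := rfl
      rw [hval, hval2]
      have := Nat.mul_le_mul_left b hik
      omega
  have htri : (Matrix.reindex e e U).BlockTriangular id := by
    intro r s hrs
    by_contra hne
    have := hUB (e.symm r) (e.symm s) hne
    simp only [Equiv.apply_symm_apply] at this
    exact absurd (Fin.le_def.mpr this) (not_le.mpr hrs)
  rw [Matrix.charpoly_of_upperTriangular _ htri]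
  have hdiag : ∀ p : Fin a × Fin b,
      (X - C ((Matrix.reindex e e U) (e p) (e p))) =
      (if p.2.1 = 0 then (if p.1.1 = 0 then X - C (2 * (b : ℤ) * ((a : ℤ) - 1))
        else X - C ((b : ℤ) * ((a : ℤ) - 2))) else X - C c) := by
    intro ⟨i, j⟩
    have : (Matrix.reindex e e U) (e (i, j)) (e (i, j)) = U (i, j) (i, j) := by
      simp [Matrix.reindex_apply]
    rw [this, hU]
    simp only [Matrix.add_apply, Matrix.smul_apply, Matrix.one_apply_eq, smul_eq_mul, mul_one,
      Matrix.kroneckerMap_apply, Matrix.sub_apply, Matrix.one_apply_eq, Ub, Matrix.of_apply]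
    by_cases hi : i.1 = 0 <;> by_cases hj : j.1 = 0 <;>
      simp only [hi, hj, if_true, if_false] <;> rw [hc] <;> ring_nf
  have hprod : (∏ r : Fin (a * b), (X - C ((Matrix.reindex e e U) r r))) =
      ∏ p : Fin a × Fin b, (X - C ((Matrix.reindex e e U) (e p) (e p))) := by
    rw [← Equiv.prod_comp e (fun r => X - C ((Matrix.reindex e e U) r r))]
  rw [hprod, Finset.prod_congr rfl (fun p _ => hdiag p)]
  rw [Fintype.prod_prod_type]
  have hinner : ∀ i : Fin a,
      (∏ j : Fin b, (if j.1 = 0 then (if i.1 = 0 then X - C (2 * (b : ℤ) * ((a : ℤ) - 1))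
        else X - C ((b : ℤ) * ((a : ℤ) - 2))) else X - C c)) =
      (if i.1 = 0 then (X - C (2 * (b : ℤ) * ((a : ℤ) - 1))) * (X - C c) ^ (b - 1)
        else (X - C ((b : ℤ) * ((a : ℤ) - 2))) * (X - C c) ^ (b - 1)) := by
    intro i
    rw [prod_if_zero b hB]
    by_cases hi : i.1 = 0 <;> simp [hi]
  rw [Finset.prod_congr rfl (fun i _ => hinner i), prod_if_zero a hA]
  obtain ⟨a', rfl⟩ : ∃ a', a = a' + 1 := ⟨a - 1, by omega⟩
  obtain ⟨b', rfl⟩ : ∃ b', b = b' + 1 := ⟨b - 1, by omega⟩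
  simp only [Nat.add_sub_cancel]
  have hexp : (a' + 1) * b' = b' + b' * a' := by ring
  rw [hexp, pow_add, mul_pow, ← pow_mul]
  ring
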